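/- arXiv:2510.05462 — 3 statements merged into one kernel-verified Lean document; each statement's English description precedes it below -/
import Mathlib

section
/- Let G be a finite graph with vertex set V of size ℓ, having no isolated vertex. Then there exists a subset V₁ ⊆ V with |V₁| ≤ ℓ/2 such that every vertex in V \ V₁ has a neighbour in V₁. -/
/-- A finite graph with no isolated vertex has a subset `V₁` of at most half the
vertices such that every vertex outside `V₁` has a neighbour in `V₁`. -/
theorem stmt_0 {V : Type*} [Fintype V] (G : SimpleGraph V)
    (hno : ∀ v : V, ∃ w : V, G.Adj v w) :
    ∃ V₁ : Finset V, 2 * V₁.card ≤ Fintype.card V ∧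
      ∀ v : V, v ∉ V₁ → ∃ u ∈ V₁, G.Adj v u := by
  classical
  set P : Finset V → Prop := fun S => ∀ v ∉ S, ∃ u ∈ S, G.Adj v u with hP
  have hPuniv : P Finset.univ := fun v hv => absurd (Finset.mem_univ v) hv
  obtain ⟨D, hD, hmin⟩ := Finset.exists_min_image
    (Finset.univ.filter P) Finset.card ⟨Finset.univ, Finset.mem_filter.mpr ⟨Finset.mem_univ _, hPuniv⟩⟩
  have hDP : P D := (Finset.mem_filter.mp hD).2
  -- every vertex of D has a neighbour outside D
  have hout : ∀ v ∈ D, ∃ u ∉ D, G.Adj v u := by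
    intro v hv
    have herase : ¬ P (D.erase v) := by
      intro h
      have := hmin (D.erase v) (Finset.mem_filter.mpr ⟨Finset.mem_univ _, h⟩)
      have hlt := Finset.card_erase_lt_of_mem hv
      omega
    simp only [hP, not_forall] at herase
    obtain ⟨u, hu, hnu⟩ := herase
    push_neg at hnu
    by_cases huv : u = v
    · subst huv
      obtain ⟨w, hw⟩ := hno u
      refine ⟨w, fun hwD => ?_, hw⟩
      exact hnu w (Finset.mem_erase.mpr ⟨fun h => G.loopless.irrefl u (h ▸ hw), hwD⟩) hw
    · have huD : u ∉ D := fun h => hu (Finset.mem_erase.mpr ⟨huv, h⟩)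
      obtain ⟨w, hwD, hadj⟩ := hDP u huD
      have hwv : w = v := by
        by_contra hne
        exact hnu w (Finset.mem_erase.mpr ⟨hne, hwD⟩) hadj
      exact ⟨u, huD, hwv ▸ hadj.symm⟩
  have hcomp : P Dᶜ := by
    intro v hv
    have hvD : v ∈ D := by simpa using hv
    obtain ⟨u, huD, hadj⟩ := hout v hvD
    exact ⟨u, Finset.mem_compl.mpr huD, hadj⟩
  have hsum : D.card + Dᶜ.card = Fintype.card V := by
    simp
  by_cases hle : D.card ≤ Dᶜ.card
  · exact ⟨D, by omega, hDP⟩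
  · exact ⟨Dᶜ, by omega, hcomp⟩
end

section
/- Call a sequence of integers (z_n) eventually Zsigmondy if there is N₀ ≥ 1 such that for all n ≥ N₀, z_n has a primitive prime divisor, i.e., a prime dividing z_n that divides no z_m with m < n; assume moreover z_n ≠ ±1 for n ≥ N₀. Let Γ ⊆ ℤ be the multiplicative semigroup generated (with inverses in ℚ) by r nonzero integers, and let Γ̄ = {z ∈ ℤ : z^m ∈ Γ for some m ∈ ℕ, m ≥ 1} be its division semigroup. Then the number of indices n with z_n ∈ Γ̄ is at most N₀ + r. -/
private lemma padicValRat_zpow' {p : ℕ} [Fact p.Prime] {q : ℚ} (hq : q ≠ 0) (n : ℤ) :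
    padicValRat p (q ^ n) = n * padicValRat p q := by
  cases n with
  | ofNat n =>
      rw [Int.ofNat_eq_natCast, zpow_natCast, padicValRat.pow q]
  | negSucc n =>
      rw [zpow_negSucc, padicValRat.inv, padicValRat.pow q]
      push_cast [Int.negSucc_eq]; ring

private lemma padicValRat_prod' {p : ℕ} [Fact p.Prime] {ι : Type*} (s : Finset ι)
    (f : ι → ℚ) (hf : ∀ i ∈ s, f i ≠ 0) :
    padicValRat p (∏ i ∈ s, f i) = ∑ i ∈ s, padicValRat p (f i) := by
  induction s using Finset.cons_induction with
  | empty => simp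
  | cons a s ha ih =>
      rw [Finset.prod_cons, Finset.sum_cons,
        padicValRat.mul (hf a (Finset.mem_cons_self a s))
          (Finset.prod_ne_zero_iff.mpr fun i hi => hf i (Finset.mem_cons_of_mem hi)),
        ih fun i hi => hf i (Finset.mem_cons_of_mem hi)]

/-- If `(z n)` is a sequence of nonzero integers which is eventually Zsigmondy
(from index `N₀` on, each `z n` is not `±1` and has a primitive prime divisor),
and `Γ̄` is the division semigroup of the group generated by `r` nonzero integers
`g 1, …, g r`, then at most `N₀ + r` indices `n` satisfy `z n ∈ Γ̄`. -/
theorem stmt_5 (z : ℕ → ℤ) (hz : ∀ n, z n ≠ 0) (N₀ : ℕ) (hN₀ : 1 ≤ N₀)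
    (hZsig : ∀ n, N₀ ≤ n → z n ≠ 1 ∧ z n ≠ -1 ∧
      ∃ p : ℕ, p.Prime ∧ (p : ℤ) ∣ z n ∧ ∀ m, m < n → ¬ (p : ℤ) ∣ z m)
    (r : ℕ) (g : Fin r → ℤ) (hg : ∀ j, g j ≠ 0) :
    {n : ℕ | ∃ m : ℕ, 1 ≤ m ∧ ∃ k : Fin r → ℤ,
        ((z n : ℚ)) ^ m = ∏ j, (g j : ℚ) ^ (k j)}.ncard ≤ N₀ + r := by
  set S := {n : ℕ | ∃ m : ℕ, 1 ≤ m ∧ ∃ k : Fin r → ℤ,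
      ((z n : ℚ)) ^ m = ∏ j, (g j : ℚ) ^ (k j)} with hSdef
  by_contra hcon
  push_neg at hcon
  -- S must be finite, else ncard = 0
  have hfin : S.Finite := by
    by_contra hinf
    rw [Set.Infinite.ncard hinf] at hcon
    omega
  -- at least r+1 elements of S are ≥ N₀
  set s : Finset ℕ := hfin.toFinset with hsdef
  have hscard : N₀ + r < s.card := by
    rwa [Set.ncard_eq_toFinset_card S hfin] at hcon
  set t : Finset ℕ := s.filter (fun n => N₀ ≤ n) with htdef
  have htcard : r + 1 ≤ t.card := by
    have h1 : s.filter (fun n => ¬ N₀ ≤ n) ⊆ Finset.range N₀ := by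
      intro x hx
      simp only [Finset.mem_filter, not_le] at hx
      exact Finset.mem_range.mpr hx.2
    have h2 := Finset.card_le_card h1
    rw [Finset.card_range] at h2
    have h3 := Finset.card_filter_add_card_filter_not
      (s := s) (p := fun n => N₀ ≤ n)
    have h4 : (s.filter (fun n => N₀ ≤ n)).card = t.card := rfl
    omega
  obtain ⟨u, hut, hucard⟩ := Finset.exists_subset_card_eq htcard
  have e : Fin (r + 1) ≃ u := (u.equivFin.trans (finCongr hucard)).symm
  set f : Fin (r + 1) → ℕ := fun i => ((e i : ℕ)) with hfdef
  have hfinj : Function.Injective f := fun i j hij => e.injective (Subtype.ext hij)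
  have hft : ∀ i, f i ∈ t := fun i => hut (e i).2
  have hfS : ∀ i, f i ∈ S := fun i => (hfin.mem_toFinset).1 (Finset.mem_filter.1 (hft i)).1
  have hfN₀ : ∀ i, N₀ ≤ f i := fun i => (Finset.mem_filter.1 (hft i)).2
  -- choose the witnesses
  choose m hm1 k hk using hfS
  -- the exponent vectors as rational vectors
  set K : Fin (r + 1) → (Fin r → ℚ) := fun i j => (k i j : ℚ) with hKdef
  have hdep : ¬ LinearIndependent ℚ K := by
    intro hli
    have h1 := hli.fintype_card_le_finrank
    rw [Module.finrank_fintype_fun_eq_card] at h1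
    simp [Fintype.card_fin] at h1
  rw [Fintype.not_linearIndependent_iff] at hdep
  obtain ⟨c, hcsum, i₁, hi₁⟩ := hdep
  -- pick index with c i ≠ 0 maximizing f
  have hTne : (Finset.univ.filter (fun i => c i ≠ 0)).Nonempty :=
    ⟨i₁, Finset.mem_filter.mpr ⟨Finset.mem_univ _, hi₁⟩⟩
  obtain ⟨i₀, hi₀mem, hi₀max⟩ := Finset.exists_max_image _ f hTne
  have hci₀ : c i₀ ≠ 0 := (Finset.mem_filter.1 hi₀mem).2
  -- primitive prime for n₀ = f i₀
  obtain ⟨-, -, p, hp, hpdvd, hpprim⟩ := hZsig (f i₀) (hfN₀ i₀)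
  haveI : Fact p.Prime := ⟨hp⟩
  -- valuation identity for each i
  have key : ∀ i, ((m i : ℚ)) * (padicValRat p (z (f i)) : ℚ)
      = ∑ j, (k i j : ℚ) * (padicValRat p (g j) : ℚ) := by
    intro i
    have hne : ((z (f i) : ℚ)) ≠ 0 := Int.cast_ne_zero.mpr (hz _)
    have h1 := congrArg (padicValRat p) (hk i)
    rw [padicValRat.pow (z (f i) : ℚ),
      padicValRat_prod' _ _ (fun j _ => zpow_ne_zero _ (Int.cast_ne_zero.mpr (hg j)))] at h1
    have h2 : ∀ j ∈ Finset.univ, padicValRat p ((g j : ℚ) ^ (k i j))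
        = k i j * padicValRat p (g j) :=
      fun j _ => padicValRat_zpow' (Int.cast_ne_zero.mpr (hg j)) (k i j)
    rw [Finset.sum_congr rfl h2] at h1
    have := congrArg (fun x : ℤ => (x : ℚ)) h1
    push_cast at this
    convert this using 2 <;> norm_cast
  -- the valuation of z (f i) at p, as a rational
  set V : Fin (r + 1) → ℚ := fun i => (padicValRat p (z (f i)) : ℚ) with hVdef
  -- columns of the dependence relation vanish
  have hcol : ∀ j, ∑ i, c i * (k i j : ℚ) = 0 := by
    intro j
    have := congrFun hcsum j
    simpa [Finset.sum_apply, K] using this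
  -- total sum is zero
  have hzero : ∑ i, c i * ((m i : ℚ) * V i) = 0 := by
    calc ∑ i, c i * ((m i : ℚ) * V i)
        = ∑ i, c i * ∑ j, (k i j : ℚ) * (padicValRat p (g j) : ℚ) := by
          refine Finset.sum_congr rfl fun i _ => ?_
          rw [key i]
      _ = ∑ j, (∑ i, c i * (k i j : ℚ)) * (padicValRat p (g j) : ℚ) := by
          simp_rw [Finset.mul_sum, Finset.sum_mul]
          rw [Finset.sum_comm]
          exact Finset.sum_congr rfl fun j _ => Finset.sum_congr rfl fun i _ => by ring
      _ = 0 := by simp [hcol]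
  -- but the sum reduces to the single term at i₀, which is nonzero
  have hsingle : ∑ i, c i * ((m i : ℚ) * V i) = c i₀ * ((m i₀ : ℚ) * V i₀) := by
    refine Finset.sum_eq_single i₀ (fun i _ hne => ?_) (fun h => absurd (Finset.mem_univ i₀) h)
    by_cases hci : c i = 0
    · simp [hci]
    · have himem : i ∈ Finset.univ.filter (fun i => c i ≠ 0) :=
        Finset.mem_filter.mpr ⟨Finset.mem_univ _, hci⟩
      have hle := hi₀max i himem
      have hlt : f i < f i₀ := lt_of_le_of_ne hle (fun h => hne (hfinj h))
      have hnd := hpprim (f i) hlt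
      have : V i = 0 := by
        simp [V, padicValRat.of_int, padicValInt.eq_zero_of_not_dvd hnd]
      simp [this]
  have hVpos : V i₀ ≠ 0 := by
    have h1 : (1 : ℤ) ≤ padicValInt p (z (f i₀)) := by
      have := (padicValInt_dvd_iff (p := p) 1 (z (f i₀))).mp (by simpa using hpdvd)
      rcases this with h | h
      · exact absurd h (hz _)
      · exact_mod_cast h
    simp only [V, padicValRat.of_int]
    intro h
    rw [Int.cast_eq_zero] at h
    omega
  rw [hsingle] at hzero
  have hmne : ((m i₀ : ℚ)) ≠ 0 := by
    have := hm1 i₀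
    positivity
  exact (mul_ne_zero hci₀ (mul_ne_zero hmne hVpos)) hzero
end

section
/- Let a, b ∈ ℤ with b ≠ 0 and let p^k be a prime power. The number of residues y modulo p^k satisfying y² ≡ b (mod p^k) is bounded by a constant depending only on b (indeed, at most 2·p^{ν_p(4b)} ≤ 8|b|). -/
/-- For a prime `p`, a power `p^k` dividing a product splits between the factors. -/
lemma aux_pow_dvd_mul (p : ℤ) (hp : Prime p) :
    ∀ (k : ℕ) (u v : ℤ), p ^ k ∣ u * v → ∃ i ≤ k, p ^ i ∣ u ∧ p ^ (k - i) ∣ v := by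
  intro k
  induction k with
  | zero => intro u v _; exact ⟨0, le_refl 0, by simp, by simp⟩
  | succ k ih =>
    intro u v hdvd
    have hpuv : p ∣ u * v := dvd_trans (dvd_pow_self p (Nat.succ_ne_zero k)) hdvd
    rcases hp.dvd_mul.mp hpuv with hu | hv
    · obtain ⟨u', rfl⟩ := hu
      have hk : p ^ k ∣ u' * v := by
        have : p * (p ^ k) ∣ p * (u' * v) := by
          rw [← pow_succ']
          convert hdvd using 1
          ring
        exact (mul_dvd_mul_iff_left hp.ne_zero).mp this
      obtain ⟨i, hik, hiu, hiv⟩ := ih u' v hk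
      refine ⟨i + 1, by omega, ?_, ?_⟩
      · rw [pow_succ']
        exact mul_dvd_mul (dvd_refl p) hiu
      · have : k + 1 - (i + 1) = k - i := by omega
        rw [this]; exact hiv
    · obtain ⟨v', rfl⟩ := hv
      have hk : p ^ k ∣ u * v' := by
        have : p * (p ^ k) ∣ p * (u * v') := by
          rw [← pow_succ']
          convert hdvd using 1
          ring
        exact (mul_dvd_mul_iff_left hp.ne_zero).mp this
      obtain ⟨i, hik, hiu, hiv⟩ := ih u v' hk
      refine ⟨i, by omega, hiu, ?_⟩
      have : k + 1 - i = (k - i) + 1 := by omega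
      rw [this, pow_succ']
      exact mul_dvd_mul (dvd_refl p) hiv

/-- Key lemma: two integer solutions of `y² ≡ b (mod p^k)` agree up to sign modulo
`p^(k - w/2)` where `w = ν_p(4b) < k`. -/
lemma aux_key (b : ℤ) (p : ℕ) (hp : p.Prime) (k w : ℕ)
    (hw1 : ¬ ((p : ℤ)) ^ (w + 1) ∣ 4 * b) (hwk : w < k) (Y Z : ℤ)
    (hY : (p : ℤ) ^ k ∣ Y ^ 2 - b) (hZ : (p : ℤ) ^ k ∣ Z ^ 2 - b) :
    (p : ℤ) ^ (k - w / 2) ∣ Y - Z ∨ (p : ℤ) ^ (k - w / 2) ∣ Y + Z := by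
  set h := w / 2 with hh
  have hprime : Prime ((p : ℤ)) := Nat.prime_iff_prime_int.mp hp
  have hprod : (p : ℤ) ^ k ∣ (Y - Z) * (Y + Z) := by
    have : (Y - Z) * (Y + Z) = (Y ^ 2 - b) - (Z ^ 2 - b) := by ring
    rw [this]
    exact dvd_sub hY hZ
  obtain ⟨i, hik, hiu, hiv⟩ := aux_pow_dvd_mul (p : ℤ) hprime k _ _ hprod
  by_cases h1 : i ≤ h
  · right
    exact dvd_trans (pow_dvd_pow _ (by omega)) hiv
  · by_cases h2 : k - i ≤ h
    · left
      exact dvd_trans (pow_dvd_pow _ (by omega)) hiu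
    · exfalso
      -- both valuations exceed h, so p^(h+1) divides both Y-Z and Y+Z
      have hd1 : (p : ℤ) ^ (h + 1) ∣ Y - Z := dvd_trans (pow_dvd_pow _ (by omega)) hiu
      have hd2 : (p : ℤ) ^ (h + 1) ∣ Y + Z := dvd_trans (pow_dvd_pow _ (by omega)) hiv
      have hd3 : (p : ℤ) ^ (h + 1) ∣ 2 * Y := by
        have : 2 * Y = (Y - Z) + (Y + Z) := by ring
        rw [this]; exact dvd_add hd1 hd2
      have hd4 : (p : ℤ) ^ (2 * h + 2) ∣ 4 * Y ^ 2 := by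
        have e1 : (p : ℤ) ^ (2 * h + 2) = ((p : ℤ) ^ (h + 1)) ^ 2 := by ring
        have e2 : 4 * Y ^ 2 = (2 * Y) ^ 2 := by ring
        rw [e1, e2]
        exact pow_dvd_pow_of_dvd hd3 2
      have hd5 : (p : ℤ) ^ (w + 1) ∣ 4 * Y ^ 2 :=
        dvd_trans (pow_dvd_pow _ (by omega)) hd4
      have hd6 : (p : ℤ) ^ (w + 1) ∣ 4 * (Y ^ 2 - b) :=
        dvd_trans (pow_dvd_pow _ (by omega)) (Dvd.dvd.mul_left hY 4)
      have : (p : ℤ) ^ (w + 1) ∣ 4 * b := by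
        have e : 4 * b = 4 * Y ^ 2 - 4 * (Y ^ 2 - b) := by ring
        rw [e]
        exact dvd_sub hd5 hd6
      exact hw1 this

/-- Fibers of the cast map `ZMod N → ZMod M` (for `M ∣ N`) have at most `N / M` elements. -/
lemma aux_fiber (N M : ℕ) [NeZero N] [NeZero M] (hd : M ∣ N) (c : ZMod M) :
    ((fun x : ZMod N => (ZMod.castHom hd (ZMod M)) x) ⁻¹' {c}).ncard ≤ N / M := by
  rcases Set.eq_empty_or_nonempty ((fun x : ZMod N => (ZMod.castHom hd (ZMod M)) x) ⁻¹' {c})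
    with he | ⟨a, ha⟩
  · rw [he]; simp
  · simp only [Set.mem_preimage, Set.mem_singleton_iff] at ha
    have key : ∀ x : ZMod N, (ZMod.castHom hd (ZMod M)) x = c → M ∣ (x - a).val := by
      intro x hx
      have hxa : (ZMod.castHom hd (ZMod M)) (x - a) = 0 := by
        rw [map_sub, hx, ha]; ring
      have : (((x - a).val : ℕ) : ZMod M) = 0 := by
        rw [ZMod.natCast_val]
        exact hxa
      exact (ZMod.natCast_eq_zero_iff _ _).mp this
    have hle := Set.ncard_le_ncard_of_injOn
      (fun x : ZMod N => (x - a).val / M)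
      (s := (fun x : ZMod N => (ZMod.castHom hd (ZMod M)) x) ⁻¹' {c})
      (t := Set.Iio (N / M))
      (by
        intro x hx
        simp only [Set.mem_preimage, Set.mem_singleton_iff] at hx
        simp only [Set.mem_Iio]
        exact Nat.div_lt_div_of_lt_of_dvd hd ((x - a).val_lt))
      (by
        intro x hx y hy hxy
        simp only [Set.mem_preimage, Set.mem_singleton_iff] at hx hy
        have hdx := key x hx
        have hdy := key y hy
        have hxy' : (x - a).val / M = (y - a).val / M := hxy
        have : (x - a).val = (y - a).val := by
          obtain ⟨tx, htx⟩ := hdx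
          obtain ⟨ty, hty⟩ := hdy
          have hM : 0 < M := Nat.pos_of_ne_zero (NeZero.ne M)
          rw [htx, hty, Nat.mul_div_cancel_left _ hM, Nat.mul_div_cancel_left _ hM] at hxy'
          rw [htx, hty, hxy']
        have := ZMod.val_injective N this
        exact sub_left_injective this)
      (Set.finite_Iio _)
    calc ((fun x : ZMod N => (ZMod.castHom hd (ZMod M)) x) ⁻¹' {c}).ncard
        ≤ (Set.Iio (N / M)).ncard := hle
      _ ≤ N / M := by
          rw [Set.ncard_def, show Set.Iio (N / M) = {i | i < N / M} from rfl,
            Set.Nat.encard_range]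
          simp

/-- The number of residues `y` modulo `p^k` with `y² ≡ b (mod p^k)`, for a fixed
nonzero integer `b`, is at most `8|b|`, uniformly in the prime power `p^k`. -/
theorem stmt_15 (b : ℤ) (hb : b ≠ 0) (p : ℕ) (hp : p.Prime) (k : ℕ) (hk : 1 ≤ k) :
    {y : ZMod (p ^ k) | y ^ 2 = (b : ZMod (p ^ k))}.ncard ≤ 8 * b.natAbs := by
  haveI : NeZero (p ^ k) := ⟨pow_ne_zero k hp.pos.ne'⟩
  set S := {y : ZMod (p ^ k) | y ^ 2 = (b : ZMod (p ^ k))} with hSdef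
  set n := (4 * b).natAbs with hn
  have hn0 : n ≠ 0 := by
    simp only [hn, ne_eq, Int.natAbs_eq_zero]
    intro hcon
    apply hb
    omega
  set w := n.factorization p with hw
  have hpw_dvd : p ^ w ∣ n := Nat.ordProj_dvd n p
  have hpw_le : p ^ w ≤ n := Nat.le_of_dvd (Nat.pos_of_ne_zero hn0) hpw_dvd
  have hnval : n = 4 * b.natAbs := by
    rw [hn, Int.natAbs_mul]
    norm_num
  have hnot : ¬ (p : ℤ) ^ (w + 1) ∣ 4 * b := by
    intro hdvd
    have h2 : p ^ (w + 1) ∣ n := by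
      have h3 := Int.natAbs_dvd_natAbs.mpr hdvd
      simpa [Int.natAbs_pow] using h3
    exact Nat.pow_succ_factorization_not_dvd hn0 hp h2
  have hchar : ∀ y : ZMod (p ^ k), y ∈ S → (p : ℤ) ^ k ∣ ((y.val : ℤ)) ^ 2 - b := by
    intro y hy
    have hy2 : y ^ 2 = (b : ZMod (p ^ k)) := hy
    have hcast : (((y.val : ℤ) ^ 2 - b : ℤ) : ZMod (p ^ k)) = 0 := by
      push_cast
      rw [ZMod.natCast_val, ZMod.cast_id, hy2]
      ring
    rw [← Nat.cast_pow]
    exact (ZMod.intCast_zmod_eq_zero_iff_dvd _ _).mp hcast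
  by_cases hcase : k ≤ w
  · calc S.ncard ≤ (Set.univ : Set (ZMod (p ^ k))).ncard :=
          Set.ncard_le_ncard (Set.subset_univ _) Set.finite_univ
      _ = p ^ k := by rw [Set.ncard_univ, Nat.card_zmod]
      _ ≤ p ^ w := Nat.pow_le_pow_right hp.pos hcase
      _ ≤ n := hpw_le
      _ ≤ 8 * b.natAbs := by omega
  · push_neg at hcase
    set m := k - w / 2 with hm
    have hm_le : m ≤ k := Nat.sub_le _ _
    have hmd : p ^ m ∣ p ^ k := pow_dvd_pow p hm_le
    haveI : NeZero (p ^ m) := ⟨pow_ne_zero m hp.pos.ne'⟩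
    set f : ZMod (p ^ k) → ZMod (p ^ m) := fun x => (ZMod.castHom hmd (ZMod (p ^ m))) x with hf
    rcases Set.eq_empty_or_nonempty S with hS | ⟨y₀, hy₀⟩
    · rw [hS]; simp
    · have hfz : ∀ y z : ZMod (p ^ k), (p : ℤ) ^ m ∣ (y.val : ℤ) - (z.val : ℤ) → f y = f z := by
        intro y z hdvd
        have h0 : (((y.val : ℤ) - (z.val : ℤ) : ℤ) : ZMod (p ^ m)) = 0 := by
          rw [← Nat.cast_pow] at hdvd
          exact (ZMod.intCast_zmod_eq_zero_iff_dvd _ _).mpr hdvd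
        have : f y - f z = 0 := by
          simp only [hf, ZMod.castHom_apply]
          push_cast at h0
          rw [ZMod.natCast_val, ZMod.natCast_val] at h0
          exact h0
        exact sub_eq_zero.mp this
      have hfz' : ∀ y z : ZMod (p ^ k), (p : ℤ) ^ m ∣ (y.val : ℤ) + (z.val : ℤ) → f y = -f z := by
        intro y z hdvd
        have h0 : (((y.val : ℤ) + (z.val : ℤ) : ℤ) : ZMod (p ^ m)) = 0 := by
          rw [← Nat.cast_pow] at hdvd
          exact (ZMod.intCast_zmod_eq_zero_iff_dvd _ _).mpr hdvd
        have : f y + f z = 0 := by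
          simp only [hf, ZMod.castHom_apply]
          push_cast at h0
          rw [ZMod.natCast_val, ZMod.natCast_val] at h0
          exact h0
        exact eq_neg_of_add_eq_zero_left this
      have hsub : S ⊆ f ⁻¹' {f y₀} ∪ f ⁻¹' {-(f y₀)} := by
        intro y hy
        have hY := hchar y hy
        have hZ := hchar y₀ hy₀
        rcases aux_key b p hp k w hnot hcase _ _ hY hZ with hc | hc
        · left
          exact hfz y y₀ hc
        · right
          exact hfz' y y₀ hc
      have hdiv : p ^ k / p ^ m = p ^ (w / 2) := by
        rw [Nat.pow_div hm_le hp.pos]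
        congr 1
        omega
      calc S.ncard ≤ (f ⁻¹' {f y₀} ∪ f ⁻¹' {-(f y₀)}).ncard :=
            Set.ncard_le_ncard hsub (Set.toFinite _)
        _ ≤ (f ⁻¹' {f y₀}).ncard + (f ⁻¹' {-(f y₀)}).ncard := Set.ncard_union_le _ _
        _ ≤ p ^ k / p ^ m + p ^ k / p ^ m :=
            Nat.add_le_add (aux_fiber _ _ hmd _) (aux_fiber _ _ hmd _)
        _ = 2 * p ^ (w / 2) := by rw [hdiv]; ring
        _ ≤ 2 * p ^ w := by
            have h5 : p ^ (w / 2) ≤ p ^ w := Nat.pow_le_pow_right hp.pos (Nat.div_le_self w 2)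
            omega
        _ ≤ 8 * b.natAbs := by omega
end
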